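/- Let S be a finite set, P : S × S → [0,1] a stochastic matrix, s ∈ S, and H ⊆ S^+ a set of nonempty finite words over S such that every word in H has last letter s. If μ_s({x ∈ S^ω : some nonempty finite prefix of x belongs to H}) = 1, then μ_s(S^ω \ H^ω) = 0, i.e., almost every trajectory lies in H^ω. -/

import Mathlib

/-- The probability of the path `s, w₁, w₂, …, wₙ` in a Markov chain with
transition matrix `P`: the product `P(s,w₁) ⬝ P(w₁,w₂) ⋯ P(wₙ₋₁,wₙ)`. -/
def pathProb {S : Type*} (P : S → S → ℝ) : S → List S → ℝ
  | _, [] => 1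
  | s, t :: w => P s t * pathProb P t w

/-- The length-`n` prefix of an infinite word. -/
def prefixList {S : Type*} (x : ℕ → S) (n : ℕ) : List S :=
  List.ofFn fun i : Fin n => x i

/-- `μ` is the law `μ_s` of the trajectory of the Markov chain `P` started according
to `P(s,·)`: the measure of every cylinder is the corresponding path probability. -/
def IsMarkovLaw {S : Type*} [MeasurableSpace S]
    (P : S → S → ℝ) (s : S) (μ : MeasureTheory.Measure (ℕ → S)) : Prop :=
  ∀ w : List S, μ { x : ℕ → S | prefixList x w.length = w } = ENNReal.ofReal (pathProb P s w)

/-- `H^ω`: infinite words that split into blocks `x_{n_i+1} ⋯ x_{n_{i+1}}` all in `H`. -/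
def omegaPow {σ : Type*} (H : Set (List σ)) : Set (ℕ → σ) :=
  { x | ∃ n : ℕ → ℕ, n 0 = 0 ∧ StrictMono n ∧
      ∀ i, (List.ofFn fun j : Fin (n (i + 1) - n i) => x (n i + j)) ∈ H }

open MeasureTheory Set

namespace Stmt9

variable {S : Type*}

def shift (n : ℕ) (x : ℕ → S) : ℕ → S := fun i => x (n + i)

def Cyl (w : List S) : Set (ℕ → S) := {x | prefixList x w.length = w}

lemma prefixList_length (x : ℕ → S) (n : ℕ) : (prefixList x n).length = n :=
  List.length_ofFn

lemma prefixList_eq_iff {x : ℕ → S} {n : ℕ} {w : List S} (h : w.length = n) :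
    prefixList x n = w ↔ ∀ i : Fin n, x i = w.get (Fin.cast h.symm i) := by
  subst h
  rw [show (prefixList x w.length = w) ↔ (prefixList x w.length = List.ofFn w.get) by
    rw [List.ofFn_get]]
  unfold prefixList
  rw [List.ofFn_inj, funext_iff]
  simp [Fin.cast]

lemma mem_Cyl {x : ℕ → S} {w : List S} :
    x ∈ Cyl w ↔ ∀ i : Fin w.length, x i = w.get i := by
  show prefixList x w.length = w ↔ _
  rw [prefixList_eq_iff rfl]
  exact Iff.rfl

lemma mem_Cyl_prefixList (x : ℕ → S) (n : ℕ) : x ∈ Cyl (prefixList x n) := by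
  show prefixList x (prefixList x n).length = prefixList x n
  rw [prefixList_length]

lemma prefixList_congr {x y : ℕ → S} {n : ℕ} (h : ∀ i < n, x i = y i) :
    prefixList x n = prefixList y n := by
  unfold prefixList
  rw [List.ofFn_inj]
  exact funext fun i => h i i.isLt

lemma prefixList_add (x : ℕ → S) (n m : ℕ) :
    prefixList x (n + m) = prefixList x n ++ prefixList (shift n x) m := by
  unfold prefixList shift
  rw [List.ofFn_add]
  rfl

lemma Cyl_inter (w v : List S) :
    Cyl w ∩ shift w.length ⁻¹' Cyl v = Cyl (w ++ v) := by
  ext x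
  show (prefixList x w.length = w ∧ prefixList (shift w.length x) v.length = v) ↔
    prefixList x (w ++ v).length = w ++ v
  rw [List.length_append, prefixList_add]
  constructor
  · rintro ⟨h1, h2⟩; rw [h1, h2]
  · intro h
    have := List.append_inj h (by rw [prefixList_length])
    exact ⟨this.1, this.2⟩

lemma prefixList_succ (x : ℕ → S) (n : ℕ) :
    prefixList x (n + 1) = x 0 :: prefixList (shift 1 x) n := by
  unfold prefixList shift
  rw [List.ofFn_succ]
  congr 1
  exact congrArg _ (funext fun i => by simp [Nat.add_comm])

lemma prefixList_getLastD (x : ℕ → S) {n : ℕ} (hn : 0 < n) (d : S) :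
    (prefixList x n).getLastD d = x (n - 1) := by
  obtain ⟨m, rfl⟩ := Nat.exists_eq_succ_of_ne_zero hn.ne'
  induction m generalizing x d with
  | zero => rfl
  | succ k ih =>
      rw [prefixList_succ x (k + 1), List.getLastD_cons,
        ih (shift 1 x) (x 0) (Nat.succ_pos k)]
      show x (1 + k) = _
      norm_num [Nat.add_comm]

end Stmt9

namespace Stmt9

variable {S : Type*} [MeasurableSpace S] [MeasurableSingletonClass S]

lemma mem_Cyl_ofFn {n : ℕ} {f : Fin n → S} {x : ℕ → S} :
    x ∈ Cyl (List.ofFn f) ↔ ∀ j : Fin n, x j = f j := by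
  show prefixList x (List.ofFn f).length = _ ↔ _
  rw [show (List.ofFn f).length = n from List.length_ofFn]
  unfold prefixList
  rw [List.ofFn_inj, funext_iff]

omit [MeasurableSingletonClass S] in
lemma measurable_shift (n : ℕ) : Measurable (shift (S := S) n) :=
  measurable_pi_lambda _ fun i => measurable_pi_apply (n + i)

lemma measurableSet_Cyl (w : List S) : MeasurableSet (Cyl w) := by
  have : Cyl w = ⋂ i : Fin w.length, {x : ℕ → S | x i = w.get i} := by
    ext x; simp [mem_Cyl, Set.mem_iInter]
  rw [this]
  refine MeasurableSet.iInter fun i => ?_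
  show MeasurableSet ((fun x : ℕ → S => x (i : ℕ)) ⁻¹' {w.get i})
  exact (measurable_pi_apply (i : ℕ)) (measurableSet_singleton (w.get i))

lemma generate_cyl [Countable S] :
    (MeasurableSpace.pi : MeasurableSpace (ℕ → S)) =
      MeasurableSpace.generateFrom {A : Set (ℕ → S) | ∃ w : List S, A = Cyl w} := by
  set G := MeasurableSpace.generateFrom {A : Set (ℕ → S) | ∃ w : List S, A = Cyl w} with hG
  have hsingle : ∀ (i : ℕ) (t : S), MeasurableSet[G] {x : ℕ → S | x i = t} := by
    intro i t
    have : {x : ℕ → S | x i = t} =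
        ⋃ (f : Fin (i + 1) → S) (_ : f (Fin.last i) = t), Cyl (List.ofFn f) := by
      ext x
      simp only [Set.mem_iUnion, Set.mem_setOf_eq]
      constructor
      · intro h
        exact ⟨fun j => x j, h, mem_Cyl_ofFn.mpr fun j => rfl⟩
      · rintro ⟨f, hf, hx⟩
        have := mem_Cyl_ofFn.mp hx (Fin.last i)
        simpa [hf] using this
    rw [this]
    exact MeasurableSet.iUnion fun f => MeasurableSet.iUnion fun _ =>
      MeasurableSpace.measurableSet_generateFrom ⟨List.ofFn f, rfl⟩
  apply le_antisymm
  · have hpi : (MeasurableSpace.pi : MeasurableSpace (ℕ → S)) =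
        ⨆ i : ℕ, MeasurableSpace.comap (fun x : ℕ → S => x i) inferInstance := rfl
    rw [hpi]
    refine iSup_le fun i => ?_
    refine fun B hB => ?_
    obtain ⟨A, _, rfl⟩ := hB
    have : (fun x : ℕ → S => x i) ⁻¹' A = ⋃ t ∈ A, {x : ℕ → S | x i = t} := by
      ext x; simp
    rw [this]
    exact MeasurableSet.biUnion A.to_countable fun t _ => hsingle i t
  · rw [MeasurableSpace.generateFrom_le_iff]
    rintro A ⟨w, rfl⟩
    exact measurableSet_Cyl w

lemma isPiSystem_cyl : IsPiSystem {A : Set (ℕ → S) | ∃ w : List S, A = Cyl w} := by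
  rintro A ⟨w, rfl⟩ B ⟨v, rfl⟩ hne
  obtain ⟨x, hxw, hxv⟩ := hne
  rcases le_total w.length v.length with h | h
  · refine ⟨v, ?_⟩
    apply Set.inter_eq_self_of_subset_right
    intro y hy
    rw [mem_Cyl] at hxw hxv hy ⊢
    intro i
    have hiv : (i : ℕ) < v.length := lt_of_lt_of_le i.isLt h
    have := hy ⟨i, hiv⟩
    rw [this]
    have := hxv ⟨i, hiv⟩
    rw [← this, hxw i]
  · refine ⟨w, ?_⟩
    apply Set.inter_eq_self_of_subset_left
    intro y hy
    rw [mem_Cyl] at hxw hxv hy ⊢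
    intro i
    have hiw : (i : ℕ) < w.length := lt_of_lt_of_le i.isLt h
    have := hy ⟨i, hiw⟩
    rw [this]
    have := hxw ⟨i, hiw⟩
    rw [← this, hxv i]

end Stmt9

namespace Stmt9

lemma pathProb_nonneg {S : Type*} {P : S → S → ℝ} (hP0 : ∀ s t, 0 ≤ P s t)
    (s : S) (w : List S) : 0 ≤ pathProb P s w := by
  induction w generalizing s with
  | nil => exact zero_le_one
  | cons a l ih => exact mul_nonneg (hP0 s a) (ih a)

lemma pathProb_append {S : Type*} (P : S → S → ℝ) (s : S) (w v : List S) :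
    pathProb P s (w ++ v) = pathProb P s w * pathProb P (w.getLastD s) v := by
  induction w generalizing s with
  | nil => simp [pathProb]
  | cons a l ih =>
      show pathProb P s (a :: (l ++ v)) = _
      rw [show pathProb P s (a :: (l ++ v)) = P s a * pathProb P a (l ++ v) from rfl,
        ih a, List.getLastD_cons]
      show _ = P s a * pathProb P a l * _
      ring

section
variable {S : Type*} [Fintype S] [MeasurableSpace S] [MeasurableSingletonClass S]
  {P : S → S → ℝ} {s : S} {μ : MeasureTheory.Measure (ℕ → S)}

lemma mu_Cyl (hμ : IsMarkovLaw P s μ) (w : List S) :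
    μ (Cyl w) = ENNReal.ofReal (pathProb P s w) := hμ w

lemma mu_univ (hμ : IsMarkovLaw P s μ) : μ Set.univ = 1 := by
  have := hμ []
  simpa [Cyl, pathProb, prefixList] using this

lemma markov (hP0 : ∀ s t, 0 ≤ P s t) (hμ : IsMarkovLaw P s μ)
    {w : List S} (hw : w.getLastD s = s) {B : Set (ℕ → S)} (hB : MeasurableSet B) :
    μ (Cyl w ∩ shift w.length ⁻¹' B) = μ (Cyl w) * μ B := by
  have hprob : IsProbabilityMeasure μ := ⟨mu_univ hμ⟩
  set ν₁ : Measure (ℕ → S) := Measure.map (shift w.length) (μ.restrict (Cyl w)) with hν₁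
  set ν₂ : Measure (ℕ → S) := μ (Cyl w) • μ with hν₂
  have hfin : IsFiniteMeasure ν₁ := by
    constructor
    rw [hν₁, Measure.map_apply (measurable_shift _) MeasurableSet.univ]
    exact lt_of_le_of_lt (measure_mono (Set.subset_univ _))
      (measure_lt_top _ _)
  have key : ν₁ = ν₂ := by
    refine MeasureTheory.ext_of_generate_finite _ generate_cyl isPiSystem_cyl ?_ ?_
    · rintro A ⟨v, rfl⟩
      rw [hν₁, Measure.map_apply (measurable_shift _) (measurableSet_Cyl v),
        Measure.restrict_apply ((measurable_shift _) (measurableSet_Cyl v)),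
        Set.inter_comm, Cyl_inter, mu_Cyl hμ, pathProb_append, hw,
        hν₂]
      rw [ENNReal.ofReal_mul (pathProb_nonneg hP0 s w)]
      simp [mu_Cyl hμ]
    · rw [hν₁, Measure.map_apply (measurable_shift _) MeasurableSet.univ,
        Set.preimage_univ, Measure.restrict_apply MeasurableSet.univ, hν₂]
      simp [mu_univ hμ]
  have := congrArg (fun m : Measure (ℕ → S) => m B) key
  simp only [hν₁, hν₂] at this
  rw [Measure.map_apply (measurable_shift _) hB,
    Measure.restrict_apply ((measurable_shift _) hB), Set.inter_comm] at this
  simpa using this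

end
end Stmt9

namespace Stmt9

open scoped Classical

section Hitting
variable {S : Type*} (H : Set (List S))

def E : Set (ℕ → S) := {x | ∃ k, 0 < k ∧ prefixList x k ∈ H}

noncomputable def hit (x : ℕ → S) : ℕ :=
  if h : x ∈ E H then Nat.find h else 0

variable {H}

lemma hit_pos {x : ℕ → S} (hx : x ∈ E H) : 0 < hit H x := by
  rw [hit, dif_pos hx]
  exact (Nat.find_spec hx).1

lemma hit_mem {x : ℕ → S} (hx : x ∈ E H) : prefixList x (hit H x) ∈ H := by
  rw [hit, dif_pos hx]
  exact (Nat.find_spec hx).2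

lemma hit_le {x : ℕ → S} (hx : x ∈ E H) {k : ℕ} (hk : 0 < k)
    (hmem : prefixList x k ∈ H) : hit H x ≤ k := by
  rw [hit, dif_pos hx]
  exact Nat.find_le ⟨hk, hmem⟩

variable (H)

noncomputable def NT : ℕ → (ℕ → S) → ℕ
  | 0, _ => 0
  | i + 1, x => NT i x + hit H (shift (NT i x) x)

def Good (i : ℕ) (x : ℕ → S) : Prop := ∀ j < i, shift (NT H j x) x ∈ E H

variable {H}

lemma Good_mono {i j : ℕ} (h : j ≤ i) {x : ℕ → S} (hg : Good H i x) : Good H j x :=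
  fun k hk => hg k (lt_of_lt_of_le hk h)

lemma NT_lt_succ {i : ℕ} {x : ℕ → S} (hg : Good H (i + 1) x) :
    NT H i x < NT H (i + 1) x := by
  show NT H i x < NT H i x + _
  exact Nat.lt_add_of_pos_right (hit_pos (hg i (Nat.lt_succ_self i)))

lemma le_NT {i : ℕ} {x : ℕ → S} (hg : Good H i x) : i ≤ NT H i x := by
  induction i with
  | zero => exact Nat.zero_le _
  | succ k ih =>
      have := NT_lt_succ hg
      have h2 := ih (Good_mono (Nat.le_succ k) hg)
      omega

lemma locality {i : ℕ} {x y : ℕ → S} (hg : Good H i x)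
    (ha : ∀ m < NT H i x, x m = y m) : Good H i y ∧ NT H i y = NT H i x := by
  induction i with
  | zero => exact ⟨fun j hj => absurd hj (Nat.not_lt_zero j), rfl⟩
  | succ k ih =>
      have hgk : Good H k x := Good_mono (Nat.le_succ k) hg
      have hle : NT H k x ≤ NT H (k + 1) x := Nat.le_add_right _ _
      obtain ⟨hgy, hNy⟩ := ih hgk (fun m hm => ha m (lt_of_lt_of_le hm hle))
      set n₀ := NT H k x with hn₀
      have hx : shift n₀ x ∈ E H := hg k (Nat.lt_succ_self k)
      set h₀ := hit H (shift n₀ x) with hh₀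
      have hash : ∀ j < h₀, shift n₀ x j = shift n₀ y j := fun j hj =>
        ha (n₀ + j) (by show n₀ + j < n₀ + h₀; omega)
      have hpre : prefixList (shift n₀ y) h₀ = prefixList (shift n₀ x) h₀ :=
        (prefixList_congr hash).symm
      have hy : shift n₀ y ∈ E H := ⟨h₀, hit_pos hx, hpre ▸ hit_mem hx⟩
      have h₁le : hit H (shift n₀ y) ≤ h₀ := hit_le hy (hit_pos hx) (hpre ▸ hit_mem hx)
      have h₀le : h₀ ≤ hit H (shift n₀ y) := by
        apply hit_le hx (hit_pos hy)
        have : prefixList (shift n₀ x) (hit H (shift n₀ y)) =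
            prefixList (shift n₀ y) (hit H (shift n₀ y)) :=
          prefixList_congr fun j hj => hash j (lt_of_lt_of_le hj h₁le)
        rw [this]
        exact hit_mem hy
      have hhits : hit H (shift n₀ y) = h₀ := le_antisymm h₁le h₀le
      constructor
      · intro j hj
        rcases Nat.lt_succ_iff_lt_or_eq.mp hj with hj' | rfl
        · exact hgy j hj'
        · rw [hNy]; exact hy
      · show NT H k y + hit H (shift (NT H k y) y) = n₀ + h₀
        rw [hNy, hhits]

lemma block_mem {i : ℕ} {x : ℕ → S} (hg : Good H i x) {j : ℕ} (hj : j < i) :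
    prefixList (shift (NT H j x) x) (hit H (shift (NT H j x) x)) ∈ H :=
  hit_mem (hg j hj)

lemma last_letter {s : S} (hH : ∀ w ∈ H, w.getLast? = some s)
    {i : ℕ} {x : ℕ → S} (hg : Good H (i + 1) x) :
    x (NT H (i + 1) x - 1) = s := by
  have hx : shift (NT H i x) x ∈ E H := hg i (Nat.lt_succ_self i)
  have hb := hit_mem hx
  have hlast := hH _ hb
  have hpos := hit_pos hx
  have : (prefixList (shift (NT H i x) x) (hit H (shift (NT H i x) x))).getLastD s = s := by
    rw [List.getLastD_eq_getLast?, hlast]; rfl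
  rw [prefixList_getLastD _ hpos] at this
  show x (NT H i x + hit H (shift (NT H i x) x) - 1) = s
  rw [← this]
  show x _ = x (NT H i x + (hit H (shift (NT H i x) x) - 1))
  congr 1
  omega

lemma good_all_omegaPow {x : ℕ → S} (h : ∀ i, Good H i x) : x ∈ omegaPow H := by
  refine ⟨fun i => NT H i x, rfl, strictMono_nat_of_lt_succ fun i => NT_lt_succ (h (i + 1)), ?_⟩
  intro i
  have : NT H (i + 1) x - NT H i x = hit H (shift (NT H i x) x) := by
    show NT H i x + _ - NT H i x = _
    omega
  rw [this]
  exact block_mem (h (i + 1)) (Nat.lt_succ_self i)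

end Hitting
end Stmt9

namespace Stmt9

lemma Good_succ_iff {S : Type*} {H : Set (List S)} {i : ℕ} {x : ℕ → S} :
    Good H (i + 1) x ↔ Good H i x ∧ shift (NT H i x) x ∈ E H := by
  constructor
  · exact fun h => ⟨Good_mono (Nat.le_succ i) h, h i (Nat.lt_succ_self i)⟩
  · rintro ⟨h1, h2⟩ j hj
    rcases Nat.lt_succ_iff_lt_or_eq.mp hj with hj' | rfl
    · exact h1 j hj'
    · exact h2

section Main
variable {S : Type*} [Fintype S] [MeasurableSpace S] [MeasurableSingletonClass S]
  {P : S → S → ℝ} {s : S} {μ : MeasureTheory.Measure (ℕ → S)} {H : Set (List S)}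

lemma measurableSet_E : MeasurableSet (E H) := by
  have : E H = ⋃ (w : List S) (_ : 0 < w.length ∧ w ∈ H), Cyl w := by
    ext x
    simp only [Set.mem_iUnion, E, Set.mem_setOf_eq]
    constructor
    · rintro ⟨k, hk, hmem⟩
      exact ⟨prefixList x k, ⟨by rw [prefixList_length]; exact hk, hmem⟩,
        mem_Cyl_prefixList x k⟩
    · rintro ⟨w, ⟨hlen, hmem⟩, hx⟩
      exact ⟨w.length, hlen, by rw [show prefixList x w.length = w from hx]; exact hmem⟩
  rw [this]
  exact MeasurableSet.iUnion fun w => MeasurableSet.iUnion fun _ => measurableSet_Cyl w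

lemma Ec_null (hμ : IsMarkovLaw P s μ)
    (hone : μ { x : ℕ → S | ∃ k > 0, prefixList x k ∈ H } = 1) : μ (E H)ᶜ = 0 := by
  have hprob : IsProbabilityMeasure μ := ⟨mu_univ hμ⟩
  have hE : μ (E H) = 1 := hone
  rw [measure_compl measurableSet_E (by simp), hE, mu_univ hμ]
  simp

lemma good_null (hP0 : ∀ s t, 0 ≤ P s t) (hμ : IsMarkovLaw P s μ)
    (hH : ∀ w ∈ H, w.getLast? = some s)
    (hone : μ { x : ℕ → S | ∃ k > 0, prefixList x k ∈ H } = 1) :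
    ∀ i, μ {x : ℕ → S | ¬ Good H i x} = 0 := by
  intro i
  induction i with
  | zero =>
      have : {x : ℕ → S | ¬ Good H 0 x} = ∅ := by
        ext x
        simp [Good]
      rw [this, measure_empty]
  | succ i ih =>
      have hsub : {x : ℕ → S | ¬ Good H (i + 1) x} ⊆
          {x : ℕ → S | ¬ Good H i x} ∪
          ⋃ n : ℕ, ({x : ℕ → S | Good H i x ∧ NT H i x = n} ∩ shift n ⁻¹' (E H)ᶜ) := by
        intro x hx
        by_cases hg : Good H i x
        · right
          refine Set.mem_iUnion.mpr ⟨NT H i x, ⟨hg, rfl⟩, ?_⟩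
          intro hE'
          exact hx (Good_succ_iff.mpr ⟨hg, hE'⟩)
        · exact Or.inl hg
      refine measure_mono_null hsub
        (measure_union_null ih (measure_iUnion_null fun n => ?_))
      -- μ ({Good i, NT i = n} ∩ shift n ⁻¹' Eᶜ) = 0
      · set W := {w : List S // w.length = n ∧ ∃ x : ℕ → S,
          (Good H i x ∧ NT H i x = n) ∧ prefixList x n = w} with hW
        have hsub2 : {x : ℕ → S | Good H i x ∧ NT H i x = n} ∩ shift n ⁻¹' (E H)ᶜ ⊆
            ⋃ w : W, (Cyl (w : List S) ∩ shift n ⁻¹' (E H)ᶜ) := by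
          rintro x ⟨⟨hg, hn⟩, hEc⟩
          refine Set.mem_iUnion.mpr ⟨⟨prefixList x n, prefixList_length x n, x, ⟨hg, hn⟩, rfl⟩,
            mem_Cyl_prefixList x n, hEc⟩
        refine measure_mono_null hsub2 (measure_iUnion_null fun w => ?_)
        obtain ⟨w, hwlen, y, ⟨hgy, hny⟩, hwy⟩ := w
        have hlastD : w.getLastD s = s := by
          rcases Nat.eq_zero_or_pos n with rfl | hn
          · have : w = [] := List.length_eq_zero_iff.mp hwlen
            rw [this]
            rfl
          · obtain ⟨i', rfl⟩ : ∃ i', i = i' + 1 := by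
              rcases Nat.eq_zero_or_pos i with rfl | hi
              · exfalso; rw [show NT H 0 y = 0 from rfl] at hny; omega
              · exact ⟨i - 1, by omega⟩
            have := last_letter hH hgy
            rw [hny] at this
            rw [← hwy, prefixList_getLastD y hn, this]
        have : Cyl w ∩ shift n ⁻¹' (E H)ᶜ = Cyl w ∩ shift w.length ⁻¹' (E H)ᶜ := by
          rw [hwlen]
        rw [this, markov hP0 hμ hlastD measurableSet_E.compl, Ec_null hμ hone, mul_zero]

theorem stmt9_aux (hP0 : ∀ s t, 0 ≤ P s t) (hμ : IsMarkovLaw P s μ)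
    (hH : ∀ w ∈ H, w.getLast? = some s)
    (hone : μ { x : ℕ → S | ∃ k > 0, prefixList x k ∈ H } = 1) :
    μ (omegaPow H)ᶜ = 0 := by
  have hsub : (omegaPow H)ᶜ ⊆ ⋃ i : ℕ, {x : ℕ → S | ¬ Good H i x} := by
    intro x hx
    by_contra hcon
    simp only [Set.mem_iUnion, Set.mem_setOf_eq, not_exists, not_not] at hcon
    exact hx (good_all_omegaPow hcon)
  exact measure_mono_null hsub (measure_iUnion_null (good_null hP0 hμ hH hone))

end Main
end Stmt9


theorem stmt9 {S : Type*} [Fintype S] [MeasurableSpace S] [MeasurableSingletonClass S]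
    (P : S → S → ℝ) (hP0 : ∀ s t, 0 ≤ P s t) (hP1 : ∀ s, ∑ t, P s t = 1)
    (s : S) (μ : MeasureTheory.Measure (ℕ → S)) (hμ : IsMarkovLaw P s μ)
    (H : Set (List S)) (hH : ∀ w ∈ H, w.getLast? = some s)
    (hone : μ { x : ℕ → S | ∃ k > 0, prefixList x k ∈ H } = 1) :
    μ (omegaPow H)ᶜ = 0 := by
  exact Stmt9.stmt9_aux hP0 hμ hH hone
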